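/- Combined correctness of partial-space search: a planning task Π has a valid plan if and only if there exists a sequence of partial-space search nodes starting at the root ⟨s₀,⊥⟩, in which each node is a successor of the previous one, ending at a node ⟨s,⊥⟩ with G ⊆ s. -/

import Mathlib

namespace PS

/-- A lifted planning task: atoms, action schemas with arities, objects,
preconditions/add/delete effects of ground instantiations, initial state and goal. -/
structure LiftedTask where
  Atom : Type
  Schema : Type
  Obj : Type
  arity : Schema → ℕ
  pre : Schema → List Obj → Set Atom
  add : Schema → List Obj → Set Atom
  del : Schema → List Obj → Set Atom
  init : Set Atom
  goal : Set Atom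

/-- A ground action: a schema with a full list of instantiating objects. -/
abbrev GroundAction (T : LiftedTask) :=
  { p : T.Schema × List T.Obj // p.2.length = T.arity p.1 }

/-- A partial action: `none` is ⊥; otherwise a schema with a prefix of instantiating objects. -/
abbrev PartialAction (T : LiftedTask) :=
  Option { p : T.Schema × List T.Obj // p.2.length ≤ T.arity p.1 }

/-- `a` is applicable in state `s` iff `pre(a) ⊆ s`. -/
def Applicable (T : LiftedTask) (a : GroundAction T) (s : Set T.Atom) : Prop :=
  T.pre a.val.1 a.val.2 ⊆ s

/-- `succ(s,a) = (s \ del(a)) ∪ add(a)`. -/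
def applySucc (T : LiftedTask) (s : Set T.Atom) (a : GroundAction T) : Set T.Atom :=
  (s \ T.del a.val.1 a.val.2) ∪ T.add a.val.1 a.val.2

/-- A ground action viewed as a (fully instantiated) partial action. -/
def toPartial (T : LiftedTask) (a : GroundAction T) : PartialAction T :=
  some ⟨a.val, le_of_eq a.prop⟩

/-- A partial action is fully instantiated iff all schema parameters are instantiated. -/
def isFull (T : LiftedTask) : PartialAction T → Prop
  | none => False
  | some p => p.val.2.length = T.arity p.val.1

/-- `𝒜^ρ`: the set of ground actions in the subtree rooted at `ρ` of the partial action tree. -/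
def subtree (T : LiftedTask) : PartialAction T → Set (GroundAction T)
  | none => Set.univ
  | some p => {a : GroundAction T | a.val.1 = p.val.1 ∧ p.val.2 <+: a.val.2}

/-- `ρ` is applicable in `s` iff `𝒜^ρ_s = 𝒜^ρ ∩ 𝒜_s ≠ ∅`. -/
def ApplicableP (T : LiftedTask) (ρ : PartialAction T) (s : Set T.Atom) : Prop :=
  ∃ a ∈ subtree T ρ, Applicable T a s

/-- The child relation of the partial action tree. -/
def Child (T : LiftedTask) : PartialAction T → PartialAction T → Prop
  | none, some p' => p'.val.2 = []
  | some p, some p' => p.val.1 = p'.val.1 ∧ ∃ o : T.Obj, p'.val.2 = p.val.2 ++ [o]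
  | _, none => False

/-- A partial-space search node: a state and a partial action. -/
abbrev Node (T : LiftedTask) := Set T.Atom × PartialAction T

/-- The successor relation of partial-space search. -/
inductive Succ (T : LiftedTask) : Node T → Node T → Prop
  | refine {s : Set T.Atom} {ρ ρ' : PartialAction T} :
      Child T ρ ρ' → ApplicableP T ρ' s → Succ T (s, ρ) (s, ρ')
  | finish {s : Set T.Atom} (a : GroundAction T) :
      Succ T (s, toPartial T a) (applySucc T s a, (none : PartialAction T))

/-- `IsPlanFrom T s π`: `π` is a valid plan starting from state `s`. -/
inductive IsPlanFrom (T : LiftedTask) : Set T.Atom → List (GroundAction T) → Prop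
  | nil {s : Set T.Atom} : T.goal ⊆ s → IsPlanFrom T s []
  | cons {s : Set T.Atom} {a : GroundAction T} {l : List (GroundAction T)} :
      Applicable T a s → IsPlanFrom T (applySucc T s a) l → IsPlanFrom T s (a :: l)

/-- The ground action corresponding to a fully instantiated partial action, if any. -/
def groundOf? (T : LiftedTask) : PartialAction T → Option (GroundAction T)
  | none => none
  | some p => if h : p.val.2.length = T.arity p.val.1 then some ⟨p.val, h⟩ else none

/-- The ordered subsequence of fully instantiated partial actions in a node sequence. -/
def extractPlan (T : LiftedTask) (l : List (Node T)) : List (GroundAction T) :=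
  l.filterMap fun n => groundOf? T n.2

/-- The partial action instantiating the first `j` parameters of the ground action `a`. -/
def prefixPA (T : LiftedTask) (a : GroundAction T) (j : ℕ) : PartialAction T :=
  some ⟨(a.val.1, a.val.2.take j), by
    rw [List.length_take]
    exact (min_le_right _ _).trans a.prop.le⟩

/-- The parent map of the partial action tree (sends ⊥ to ⊥). -/
def parentPA (T : LiftedTask) : PartialAction T → PartialAction T
  | none => none
  | some p =>
      if p.val.2.isEmpty then none
      else some ⟨(p.val.1, p.val.2.dropLast), by
        rw [List.length_dropLast]
        exact (Nat.sub_le _ _).trans p.prop⟩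

/-- Specificity: `0` for ⊥, `j+1` for a partial action with `j` instantiated parameters. -/
def spec (T : LiftedTask) : PartialAction T → ℕ
  | none => 0
  | some p => p.val.2.length + 1

/-- The canonical root-to-goal path obtained by decomposing each plan action into its
chain of partial actions of increasing specificity. -/
def planPath (T : LiftedTask) : Set T.Atom → List (GroundAction T) → List (Node T)
  | s, [] => [(s, (none : PartialAction T))]
  | s, a :: π =>
      ((s, (none : PartialAction T)) ::
        (List.range (T.arity a.val.1 + 1)).map fun j => (s, prefixPA T a j)) ++
        planPath T (applySucc T s a) π

/-- `ρ` lies on the unique chain from ⊥ to the ground action `a` in the partial action tree. -/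
def OnChain (T : LiftedTask) (ρ : PartialAction T) (a : GroundAction T) : Prop :=
  ρ = none ∨ ∃ j ≤ T.arity a.val.1, ρ = prefixPA T a j


/-- Auxiliary: applicability of a fully instantiated partial action gives applicability
of the underlying ground action. -/
lemma applicable_of_applicableP_full (T : LiftedTask) (a : GroundAction T) (s : Set T.Atom)
    (h : ApplicableP T (toPartial T a) s) : Applicable T a s := by
  obtain ⟨b, hb, hba⟩ := h
  obtain ⟨h1, h2⟩ := hb
  have hlen : a.val.2.length = b.val.2.length := by
    rw [a.prop, b.prop, h1]
  have : a.val.2 = b.val.2 := h2.eq_of_length hlen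
  have hab : a = b := Subtype.ext (Prod.ext h1.symm this)
  rw [hab]; exact hba

/-- Auxiliary: the fully instantiated prefix partial action is `toPartial`. -/
lemma prefixPA_full (T : LiftedTask) (a : GroundAction T) :
    prefixPA T a (T.arity a.val.1) = toPartial T a := by
  unfold prefixPA toPartial
  congr 1
  apply Subtype.ext
  show (a.val.1, a.val.2.take (T.arity a.val.1)) = a.val
  rw [← a.prop, List.take_length]

/-- Backward direction, generalized. -/
lemma back (T : LiftedTask) : ∀ (ns : List (Node T)) (hne : ns ≠ []),
    List.Chain' (Succ T) ns →
    (ns.getLast hne).2 = (none : PartialAction T) →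
    T.goal ⊆ (ns.getLast hne).1 →
    ((ns.head hne).2 = (none : PartialAction T) ∨
      ApplicableP T (ns.head hne).2 (ns.head hne).1) →
    ∃ π, IsPlanFrom T (ns.head hne).1 π
  | [], hne, _, _, _, _ => absurd rfl hne
  | [x], _, _, _, hgoal, _ => ⟨[], .nil hgoal⟩
  | x :: y :: l, _, hchain, hlast, hgoal, happ => by
    have hne' : y :: l ≠ [] := by simp
    have hsucc : Succ T x y := (List.isChain_cons_cons.mp hchain).1
    have hchain' : List.Chain' (Succ T) (y :: l) := (List.isChain_cons_cons.mp hchain).2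
    have hl : ((x :: y :: l).getLast (by simp)) = (y :: l).getLast hne' :=
      List.getLast_cons hne'
    rw [hl] at hlast hgoal
    cases hsucc with
    | refine hc ha =>
      obtain ⟨π, hπ⟩ := back T _ hne' hchain' hlast hgoal (Or.inr ha)
      exact ⟨π, hπ⟩
    | finish a =>
      rcases happ with h | h
      · simp [toPartial] at h
      · have ha := applicable_of_applicableP_full T a _ h
        obtain ⟨π, hπ⟩ := back T _ hne' hchain' hlast hgoal (Or.inl rfl)
        exact ⟨a :: π, .cons ha hπ⟩

/-- Forward direction, generalized. -/
lemma fwd (T : LiftedTask) {s : Set T.Atom} {π : List (GroundAction T)}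
    (h : IsPlanFrom T s π) :
    ∃ (ns : List (Node T)) (hne : ns ≠ []),
      List.Chain' (Succ T) ns ∧
      ns.head hne = (s, (none : PartialAction T)) ∧
      (ns.getLast hne).2 = (none : PartialAction T) ∧
      T.goal ⊆ (ns.getLast hne).1 := by
  induction h with
  | @nil s hg =>
    exact ⟨[(s, none)], by simp, List.isChain_singleton _, rfl, rfl, hg⟩
  | @cons s a π ha _ ih =>
    obtain ⟨ns', hne', hch', hhd', hl2', hlg'⟩ := ih
    set k := T.arity a.val.1 with hk
    set f : ℕ → Node T := fun j => (s, prefixPA T a j) with hf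
    set L : List (Node T) := (List.range (k + 1)).map f with hL
    have hLne : L ≠ [] := by simp [hL]
    have hLlast : L.getLast? = some (f k) := by
      rw [hL, List.range_succ, List.map_append]
      exact List.getLast?_concat
    have hLhead : L.head? = some (f 0) := by
      rw [hL, List.range_succ_eq_map]
      simp
    -- chain within L
    have hchL : List.Chain' (Succ T) L := by
      rw [hL, List.Chain', List.isChain_map, List.isChain_range_succ]
      intro m hm
      refine Succ.refine ?_ ?_
      · refine ⟨rfl, ⟨a.val.2.get ⟨m, by rw [a.prop]; exact hm⟩, ?_⟩⟩
        show a.val.2.take (m + 1) = a.val.2.take m ++ [_]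
        rw [List.take_succ]
        congr 1
        rw [List.getElem?_eq_getElem (by rw [a.prop]; exact hm)]
        rfl
      · exact ⟨a, ⟨rfl, List.take_prefix _ _⟩, ha⟩
    -- step from last of L to head of ns'
    have hstep : Succ T (f k) (ns'.head hne') := by
      have : f k = (s, toPartial T a) := by rw [hf]; exact congrArg (Prod.mk s) (prefixPA_full T a)
      rw [this, hhd']
      exact Succ.finish a
    refine ⟨(s, none) :: (L ++ ns'), by simp, ?_, rfl, ?_, ?_⟩
    · rw [List.Chain', List.isChain_cons]
      constructor
      · intro y hy
        rw [List.head?_append_of_ne_nil _ hLne, hLhead] at hy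
        cases hy
        refine Succ.refine ?_ ⟨a, ⟨rfl, List.take_prefix _ _⟩, ha⟩
        show a.val.2.take 0 = []
        rfl
      · rw [List.isChain_append]
        refine ⟨hchL, hch', ?_⟩
        intro x hx y hy
        rw [hLlast] at hx
        rw [List.head?_eq_head hne'] at hy
        cases hx; cases hy
        exact hstep
    · have : ((s, (none : PartialAction T)) :: (L ++ ns')).getLast (by simp) =
          ns'.getLast hne' := by
        rw [List.getLast_cons (by simp [hne']), List.getLast_append_of_right_ne_nil _ _ hne']
      rw [this]; exact hl2'
    · have : ((s, (none : PartialAction T)) :: (L ++ ns')).getLast (by simp) =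
          ns'.getLast hne' := by
        rw [List.getLast_cons (by simp [hne']), List.getLast_append_of_right_ne_nil _ _ hne']
      rw [this]; exact hlg'

/-- **Combined correctness of partial-space search**: a planning task has a valid plan iff
partial-space search can reach a goal node `⟨s,⊥⟩` with `G ⊆ s` from the root `⟨s₀,⊥⟩`. -/
theorem partial_space_search_correct (T : LiftedTask) :
    (∃ π : List (GroundAction T), IsPlanFrom T T.init π) ↔
    (∃ (ns : List (Node T)) (hne : ns ≠ []),
      List.Chain' (Succ T) ns ∧
      ns.head hne = (T.init, (none : PartialAction T)) ∧
      (ns.getLast hne).2 = (none : PartialAction T) ∧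
      T.goal ⊆ (ns.getLast hne).1) := by
  constructor
  · rintro ⟨π, hπ⟩
    exact fwd T hπ
  · rintro ⟨ns, hne, hch, hhd, hl2, hlg⟩
    have := back T ns hne hch hl2 hlg (Or.inl (by rw [hhd]))
    rw [hhd] at this
    exact this

end PS
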